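/- (Bauer–Hua–Yau, bounded-Laplacian case) Let b be a connected locally finite graph over (X,m) with sup_x Deg(x) < ∞, and let ρ be an intrinsic pseudo-metric for b over (X,m) with jump size at most S for some S ∈ (0,∞). Then the heat kernel satisfies p_t(x,y) ≤ (1/√(m(x)·m(y))) · exp(−(t/S²)·ζ(ρ(x,y)·S / t)) for all x, y ∈ X and t > 0. -/

import Mathlib

set_option linter.unusedSectionVars false
set_option linter.unusedVariables false

open MeasureTheory

noncomputable section

/-- `ζ(x) = x·arsinh(x) + 1 − √(x² + 1)`. -/
def zeta (x : ℝ) : ℝ := x * Real.arsinh x + 1 - Real.sqrt (x ^ 2 + 1)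

/-- The (weighted) degree `deg(x) = Σ_y b(x,y)` of a vertex. -/
def graphDeg {X : Type*} (b : X → X → ℝ) (x : X) : ℝ := ∑' y, b x y

/-- The measure on `X` determined by a vertex weight `m`, i.e. `μ(A) = Σ_{x ∈ A} m(x)`. -/
def graphMeasure {X : Type*} [MeasurableSpace X] (m : X → ℝ) : Measure X :=
  Measure.sum (fun x => ENNReal.ofReal (m x) • Measure.dirac x)

lemma graphMeasure_singleton {X : Type*} [MeasurableSpace X] [MeasurableSingletonClass X]
    (m : X → ℝ) (x : X) : graphMeasure m {x} = ENNReal.ofReal (m x) := by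
  rw [graphMeasure, Measure.sum_apply _ (measurableSet_singleton x)]
  rw [tsum_eq_single x]
  · simp
  · intro z hz
    have : z ∉ ({x} : Set X) := by simpa using hz
    simp [Measure.dirac_apply' _ (measurableSet_singleton x), Set.indicator_of_notMem this]

lemma graphMeasure_singleton_ne_top {X : Type*} [MeasurableSpace X]
    [MeasurableSingletonClass X] (m : X → ℝ) (x : X) : graphMeasure m {x} ≠ ⊤ := by
  rw [graphMeasure_singleton]; exact ENNReal.ofReal_ne_top

/-- `δ_x`, the indicator of the vertex `x`, as an element of `ℓ²(X,m) = L²(graphMeasure m)`. -/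
def deltaVert {X : Type*} [MeasurableSpace X] [MeasurableSingletonClass X]
    (m : X → ℝ) (x : X) : Lp ℝ 2 (graphMeasure m) :=
  indicatorConstLp 2 (measurableSet_singleton x) (graphMeasure_singleton_ne_top m x) (1 : ℝ)

section Aux

variable {X : Type*} [Countable X] [MeasurableSpace X] [MeasurableSingletonClass X]
variable {m : X → ℝ}

lemma gm_singleton_toReal (hm : ∀ x, 0 < m x) (x : X) :
    (graphMeasure m {x}).toReal = m x := by
  rw [graphMeasure_singleton, ENNReal.toReal_ofReal (hm x).le]

lemma gm_eq_of_ae (hm : ∀ x, 0 < m x) {f g : X → ℝ}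
    (h : f =ᵐ[graphMeasure m] g) : f = g := by
  funext z
  by_contra hz
  have h0 : graphMeasure m {z} = 0 := by
    refine measure_mono_null ?_ (ae_iff.mp h)
    intro w hw
    simp only [Set.mem_singleton_iff] at hw
    subst hw; exact hz
  rw [graphMeasure_singleton] at h0
  exact absurd h0 (ne_of_gt (ENNReal.ofReal_pos.mpr (hm z)))

lemma gm_integral_eq_tsum (hm : ∀ x, 0 < m x) {f : X → ℝ}
    (hf : Integrable f (graphMeasure m)) :
    ∫ a, f a ∂(graphMeasure m) = ∑' a, m a * f a := by
  rw [integral_countable' hf]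
  exact tsum_congr fun a => by rw [measureReal_def, gm_singleton_toReal hm, smul_eq_mul]

lemma gm_summable_of_integrable (hm : ∀ x, 0 < m x) {f : X → ℝ}
    (hf : Integrable f (graphMeasure m)) :
    Summable (fun a => m a * f a) := by
  have h1 : ∫⁻ a, ‖f a‖ₑ ∂(graphMeasure m) < ⊤ := hf.2
  rw [lintegral_countable'] at h1
  have h2 : Summable (fun a => (‖f a‖ₑ * graphMeasure m {a}).toReal) :=
    ENNReal.summable_toReal h1.ne
  have h3 : Summable (fun a => |m a * f a|) := by
    refine h2.congr fun a => ?_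
    rw [ENNReal.toReal_mul, toReal_enorm, gm_singleton_toReal hm,
      Real.norm_eq_abs, abs_mul, abs_of_pos (hm a), mul_comm]
  exact h3.of_abs

lemma gm_inner_eq_tsum (hm : ∀ x, 0 < m x) (f g : Lp ℝ 2 (graphMeasure m)) :
    (inner ℝ f g : ℝ) = ∑' a, m a * ((f : X → ℝ) a * (g : X → ℝ) a) := by
  rw [MeasureTheory.L2.inner_def]
  rw [gm_integral_eq_tsum hm]
  · exact tsum_congr fun a => by
      simp [RCLike.inner_apply, starRingEnd_apply, mul_comm]
  · simpa [RCLike.inner_apply, starRingEnd_apply] using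
      MeasureTheory.L2.integrable_inner (𝕜 := ℝ) f g

lemma gm_summable_inner (hm : ∀ x, 0 < m x) (f g : Lp ℝ 2 (graphMeasure m)) :
    Summable (fun a => m a * ((f : X → ℝ) a * (g : X → ℝ) a)) := by
  have := gm_summable_of_integrable hm
    (f := fun a => (f : X → ℝ) a * (g : X → ℝ) a) ?_
  · exact this
  · simpa [RCLike.inner_apply, starRingEnd_apply] using
      MeasureTheory.L2.integrable_inner (𝕜 := ℝ) g f

lemma gm_norm_sq_eq_tsum (hm : ∀ x, 0 < m x) (f : Lp ℝ 2 (graphMeasure m)) :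
    ‖f‖ ^ 2 = ∑' a, m a * ((f : X → ℝ) a * (f : X → ℝ) a) := by
  rw [← real_inner_self_eq_norm_sq, gm_inner_eq_tsum hm]

lemma gm_Lp_ext (hm : ∀ x, 0 < m x) {f g : Lp ℝ 2 (graphMeasure m)}
    (h : ∀ a, (f : X → ℝ) a = (g : X → ℝ) a) : f = g :=
  MeasureTheory.Lp.ext (Filter.Eventually.of_forall h)

open scoped Classical in
lemma deltaVert_apply (hm : ∀ x, 0 < m x) (z a : X) :
    (deltaVert m z : X → ℝ) a = if a = z then 1 else 0 := by
  have := gm_eq_of_ae hm (indicatorConstLp_coeFn (p := 2)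
    (hs := measurableSet_singleton z) (hμs := graphMeasure_singleton_ne_top m z) (c := (1:ℝ)))
  rw [deltaVert, this]
  simp [Set.indicator_apply]

lemma deltaVert_norm (hm : ∀ x, 0 < m x) (z : X) :
    ‖deltaVert m z‖ = Real.sqrt (m z) := by
  rw [deltaVert, norm_indicatorConstLp two_ne_zero ENNReal.ofNat_ne_top]
  rw [measureReal_def, gm_singleton_toReal hm]
  rw [Real.sqrt_eq_rpow]
  norm_num

end Aux
section MulOp

variable {X : Type*} [Countable X] [MeasurableSpace X] [MeasurableSingletonClass X]
variable {m : X → ℝ}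

lemma gm_coe_add (hm : ∀ x, 0 < m x) (f g : Lp ℝ 2 (graphMeasure m)) (a : X) :
    ((f + g : Lp ℝ 2 (graphMeasure m)) : X → ℝ) a = (f : X → ℝ) a + (g : X → ℝ) a := by
  rw [gm_eq_of_ae hm (MeasureTheory.Lp.coeFn_add f g)]; rfl

lemma gm_coe_smul (hm : ∀ x, 0 < m x) (c : ℝ) (f : Lp ℝ 2 (graphMeasure m)) (a : X) :
    ((c • f : Lp ℝ 2 (graphMeasure m)) : X → ℝ) a = c * (f : X → ℝ) a := by
  rw [gm_eq_of_ae hm (MeasureTheory.Lp.coeFn_smul c f)]; rfl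

lemma gm_coe_toLp (hm : ∀ x, 0 < m x) {f : X → ℝ} (hf : MemLp f 2 (graphMeasure m)) (a : X) :
    (hf.toLp f : X → ℝ) a = f a := by
  rw [gm_eq_of_ae hm hf.coeFn_toLp]

lemma gm_memℒp_mul (w : X → ℝ) {C : ℝ} (hw : ∀ x, |w x| ≤ C)
    (f : Lp ℝ 2 (graphMeasure m)) :
    MemLp (fun a => w a * (f : X → ℝ) a) 2 (graphMeasure m) := by
  refine (MeasureTheory.Lp.memLp f).of_le_mul (c := C)
    (measurable_of_countable _).aestronglyMeasurable
    (Filter.Eventually.of_forall fun a => ?_)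
  rw [Real.norm_eq_abs, Real.norm_eq_abs, abs_mul]
  exact mul_le_mul_of_nonneg_right (hw a) (abs_nonneg _)

/-- Multiplication by a bounded function `w`, as a bounded operator on `ℓ²(X,m)`. -/
def mulOp (m : X → ℝ) (hm : ∀ x, 0 < m x) (w : X → ℝ) (C : ℝ) (hC : 0 ≤ C)
    (hw : ∀ x, |w x| ≤ C) :
    Lp ℝ 2 (graphMeasure m) →L[ℝ] Lp ℝ 2 (graphMeasure m) :=
  LinearMap.mkContinuous
    { toFun := fun f => (gm_memℒp_mul w hw f).toLp _
      map_add' := fun f g => by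
        refine gm_Lp_ext hm fun a => ?_
        rw [gm_coe_toLp hm, gm_coe_add hm, gm_coe_add hm, gm_coe_toLp hm, gm_coe_toLp hm]
        ring
      map_smul' := fun c f => by
        refine gm_Lp_ext hm fun a => ?_
        rw [gm_coe_toLp hm]
        simp only [RingHom.id_apply]
        rw [gm_coe_smul hm, gm_coe_smul hm, gm_coe_toLp hm]
        ring }
    C
    (fun f => by
      simp only [LinearMap.coe_mk, AddHom.coe_mk]
      have hga : ∀ a, ((gm_memℒp_mul w hw f).toLp _ : X → ℝ) a = w a * (f : X → ℝ) a :=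
        fun a => gm_coe_toLp hm _ a
      have hgsq : ‖(gm_memℒp_mul w hw f).toLp _‖ ^ 2 ≤ (C * ‖f‖) ^ 2 := by
        rw [gm_norm_sq_eq_tsum hm]
        have h1 : ∀ a, m a * (((gm_memℒp_mul w hw f).toLp _ : X → ℝ) a *
            ((gm_memℒp_mul w hw f).toLp _ : X → ℝ) a) ≤
            C ^ 2 * (m a * ((f : X → ℝ) a * (f : X → ℝ) a)) := by
          intro a
          rw [hga a]
          have hsq : w a ^ 2 ≤ C ^ 2 := by
            nlinarith [abs_nonneg (w a), sq_abs (w a), hw a]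
          nlinarith [mul_le_mul_of_nonneg_right hsq (sq_nonneg ((f : X → ℝ) a)), (hm a).le,
            mul_le_mul_of_nonneg_left
              (mul_le_mul_of_nonneg_right hsq (sq_nonneg ((f : X → ℝ) a))) (hm a).le]
        calc (∑' a, m a * (((gm_memℒp_mul w hw f).toLp _ : X → ℝ) a *
              ((gm_memℒp_mul w hw f).toLp _ : X → ℝ) a))
            ≤ ∑' a, C ^ 2 * (m a * ((f : X → ℝ) a * (f : X → ℝ) a)) :=
              Summable.tsum_le_tsum h1 (gm_summable_inner hm _ _)
                ((gm_summable_inner hm f f).mul_left _)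
          _ = C ^ 2 * ∑' a, m a * ((f : X → ℝ) a * (f : X → ℝ) a) := tsum_mul_left
          _ = (C * ‖f‖) ^ 2 := by rw [← gm_norm_sq_eq_tsum hm]; ring
      have h0g : (0:ℝ) ≤ ‖(gm_memℒp_mul w hw f).toLp _‖ := norm_nonneg _
      have h0cf : 0 ≤ C * ‖f‖ := mul_nonneg hC (norm_nonneg _)
      nlinarith)

lemma mulOp_apply (hm : ∀ x, 0 < m x) (w : X → ℝ) (C : ℝ) (hC : 0 ≤ C)
    (hw : ∀ x, |w x| ≤ C) (f : Lp ℝ 2 (graphMeasure m)) (a : X) :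
    ((mulOp m hm w C hC hw f) : X → ℝ) a = w a * (f : X → ℝ) a := by
  have : mulOp m hm w C hC hw f = (gm_memℒp_mul w hw f).toLp _ := rfl
  rw [this, gm_coe_toLp hm]

lemma mulOp_symm (hm : ∀ x, 0 < m x) (w : X → ℝ) (C : ℝ) (hC : 0 ≤ C)
    (hw : ∀ x, |w x| ≤ C) (f g : Lp ℝ 2 (graphMeasure m)) :
    (inner ℝ (mulOp m hm w C hC hw f) g : ℝ) = inner ℝ f (mulOp m hm w C hC hw g) := by
  rw [gm_inner_eq_tsum hm, gm_inner_eq_tsum hm]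
  refine tsum_congr fun a => ?_
  rw [mulOp_apply hm, mulOp_apply hm]
  ring

lemma mulOp_delta (hm : ∀ x, 0 < m x) (w : X → ℝ) (C : ℝ) (hC : 0 ≤ C)
    (hw : ∀ x, |w x| ≤ C) (z : X) :
    mulOp m hm w C hC hw (deltaVert m z) = w z • deltaVert m z := by
  refine gm_Lp_ext hm fun a => ?_
  rw [mulOp_apply hm, gm_coe_smul hm, deltaVert_apply hm]
  by_cases h : a = z
  · subst h; simp
  · simp [h]

lemma mulOp_mul_mulOp (hm : ∀ x, 0 < m x) (w w' : X → ℝ) (C C' : ℝ) (hC : 0 ≤ C)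
    (hC' : 0 ≤ C') (hw : ∀ x, |w x| ≤ C) (hw' : ∀ x, |w' x| ≤ C')
    (hinv : ∀ x, w x * w' x = 1) :
    mulOp m hm w C hC hw * mulOp m hm w' C' hC' hw' = 1 := by
  ext f : 1
  refine gm_Lp_ext hm fun a => ?_
  rw [ContinuousLinearMap.mul_apply, mulOp_apply hm, mulOp_apply hm,
    ContinuousLinearMap.one_apply, ← mul_assoc, hinv]
  ring

end MulOp
section Gronwall

open NormedSpace

variable {H : Type*} [NormedAddCommGroup H] [InnerProductSpace ℝ H] [CompleteSpace H]

lemma exp_apply_hasDerivAt (B : H →L[ℝ] H) (u : H) (s : ℝ) :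
    HasDerivAt (fun s : ℝ => exp (s • B) u) (B (exp (s • B) u)) s := by
  have h1 : HasDerivAt (fun s : ℝ => exp (s • B)) (exp (s • B) * B) s :=
    hasDerivAt_exp_smul_const B s
  have h2 := h1.clm_apply (hasDerivAt_const s u)
  simp only [map_zero, add_zero] at h2
  have h3 : (exp (s • B) * B) u = B (exp (s • B) u) := by
    have hc0 : Commute B (s • B) := by
      refine ContinuousLinearMap.ext fun v => ?_
      simp [ContinuousLinearMap.mul_apply]
    have hc : Commute B (exp (s • B)) := Commute.exp_right hc0
    rw [← ContinuousLinearMap.mul_apply B, ← hc.eq, ContinuousLinearMap.mul_apply]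
  rw [h3] at h2
  exact h2

/-- If `⟪Au,u⟫ ≥ -c‖u‖²` then `‖e^{-tA}u‖ ≤ e^{tc}‖u‖` for `t ≥ 0`. -/
lemma exp_norm_le_of_form_bound (A : H →L[ℝ] H) (c : ℝ)
    (hA : ∀ u : H, -(c * ‖u‖ ^ 2) ≤ (inner ℝ (A u) u : ℝ)) {t : ℝ} (ht : 0 ≤ t) (u : H) :
    ‖exp (-(t • A)) u‖ ≤ Real.exp (t * c) * ‖u‖ := by
  set B : H →L[ℝ] H := -A with hB
  have hBA : ∀ s : ℝ, -(s • A) = s • B := fun s => by rw [hB, smul_neg]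
  set v : ℝ → H := fun s => exp (s • B) u with hv
  set F : ℝ → ℝ := fun s => Real.exp (-(2 * c * s)) * (inner ℝ (v s) (v s) : ℝ) with hF
  have hvd : ∀ s, HasDerivAt v (B (v s)) s := fun s => exp_apply_hasDerivAt B u s
  have hgd : ∀ s, HasDerivAt (fun s => (inner ℝ (v s) (v s) : ℝ))
      (2 * (inner ℝ (B (v s)) (v s) : ℝ)) s := by
    intro s
    have := (hvd s).inner ℝ (hvd s)
    refine this.congr_deriv ?_
    rw [real_inner_comm]
    ring
  have hFd : ∀ s, HasDerivAt F
      (Real.exp (-(2 * c * s)) * (2 * (inner ℝ (B (v s)) (v s) : ℝ))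
        + (-(2 * c)) * Real.exp (-(2 * c * s)) * (inner ℝ (v s) (v s) : ℝ)) s := by
    intro s
    have he : HasDerivAt (fun s : ℝ => Real.exp (-(2 * c * s))) 
        ((-(2 * c)) * Real.exp (-(2 * c * s))) s := by
      have h0 : HasDerivAt (fun s : ℝ => -(2 * c * s)) (-(2 * c)) s := by
        exact ((hasDerivAt_id' s).const_mul (2 * c)).neg.congr_deriv (by ring)
      simpa [mul_comm] using h0.exp
    have := he.mul (hgd s)
    refine this.congr_deriv ?_
    ring
  have hderiv_nonpos : ∀ s, Real.exp (-(2 * c * s)) * (2 * (inner ℝ (B (v s)) (v s) : ℝ))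
      + (-(2 * c)) * Real.exp (-(2 * c * s)) * (inner ℝ (v s) (v s) : ℝ) ≤ 0 := by
    intro s
    have h1 : (inner ℝ (B (v s)) (v s) : ℝ) ≤ c * ‖v s‖ ^ 2 := by
      have := hA (v s)
      have h2 : (inner ℝ (B (v s)) (v s) : ℝ) = -(inner ℝ (A (v s)) (v s) : ℝ) := by
        rw [hB]; simp [inner_neg_left]
      linarith
    have h3 : (inner ℝ (v s) (v s) : ℝ) = ‖v s‖ ^ 2 := real_inner_self_eq_norm_sq _
    have he : 0 < Real.exp (-(2 * c * s)) := Real.exp_pos _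
    rw [h3]
    nlinarith
  have hanti : Antitone F := by
    refine antitone_of_deriv_nonpos (fun s => (hFd s).differentiableAt) (fun s => ?_)
    rw [(hFd s).deriv]
    exact hderiv_nonpos s
  have hF0 : F 0 = ‖u‖ ^ 2 := by
    simp only [hF, hv]
    rw [zero_smul, exp_zero]
    simp [real_inner_self_eq_norm_sq]
  have hFt := hanti ht
  rw [hF0] at hFt
  have hvt : (inner ℝ (v t) (v t) : ℝ) = ‖v t‖ ^ 2 := real_inner_self_eq_norm_sq _
  rw [hF] at hFt
  simp only [hvt] at hFt
  have hkey : ‖v t‖ ^ 2 ≤ (Real.exp (t * c) * ‖u‖) ^ 2 := by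
    have he : 0 < Real.exp (-(2 * c * t)) := Real.exp_pos _
    have h4 : Real.exp (t * c) ^ 2 = Real.exp (2 * c * t) := by
      rw [sq, ← Real.exp_add]; ring_nf
    have h5 : Real.exp (-(2 * c * t)) * Real.exp (2 * c * t) = 1 := by
      rw [← Real.exp_add]; simp
    nlinarith [Real.exp_pos (2 * c * t), sq_nonneg (‖u‖)]
  have h6 : 0 ≤ Real.exp (t * c) * ‖u‖ := by positivity
  have h7 : 0 ≤ ‖v t‖ := norm_nonneg _
  have h8 : ‖v t‖ ≤ Real.exp (t * c) * ‖u‖ := by nlinarith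
  rw [hBA t] at *
  exact h8

end Gronwall
section CoshIneq

lemma cosh_sub_one_eq (x : ℝ) : Real.cosh x - 1 = 2 * Real.sinh (x / 2) ^ 2 := by
  have h := Real.cosh_two_mul (x / 2)
  have h2 : 2 * (x / 2) = x := by ring
  rw [h2] at h
  have h3 := Real.cosh_sq (x / 2)
  nlinarith

lemma sinh_convex : ConvexOn ℝ (Set.Ici (0:ℝ)) Real.sinh := by
  refine convexOn_of_deriv2_nonneg (convex_Ici 0) Real.continuous_sinh.continuousOn
    (Real.differentiable_sinh.differentiableOn) ?_ ?_
  · rw [Real.deriv_sinh]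
    exact Real.differentiable_cosh.differentiableOn
  · intro x hx
    rw [interior_Ici] at hx
    have : deriv^[2] Real.sinh x = Real.sinh x := by
      simp [Function.iterate_succ, Real.deriv_sinh, Real.deriv_cosh]
    rw [this]
    have : (0:ℝ) ≤ x := le_of_lt hx
    positivity

lemma sinh_mul_le (z θ : ℝ) (hz : 0 ≤ z) (hθ0 : 0 ≤ θ) (hθ1 : θ ≤ 1) :
    Real.sinh (θ * z) ≤ θ * Real.sinh z := by
  have h := sinh_convex.2 (Set.mem_Ici.mpr hz) (Set.mem_Ici.mpr le_rfl) hθ0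
    (by linarith : (0:ℝ) ≤ 1 - θ) (by ring)
  simp only [smul_eq_mul, mul_zero, add_zero, Real.sinh_zero] at h
  linarith

/-- key: `cosh(λr) - 1 ≤ (r²/S²)(cosh(λS) - 1)` for `0 ≤ r ≤ S`. -/
lemma cosh_sub_one_le_sq_ratio (lam r S : ℝ) (hlam : 0 ≤ lam) (hS : 0 < S)
    (hr0 : 0 ≤ r) (hrS : r ≤ S) :
    Real.cosh (lam * r) - 1 ≤ r ^ 2 / S ^ 2 * (Real.cosh (lam * S) - 1) := by
  set θ := r / S with hθ
  have hθ0 : 0 ≤ θ := div_nonneg hr0 hS.le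
  have hθ1 : θ ≤ 1 := (div_le_one hS).mpr hrS
  have hz : 0 ≤ lam * S / 2 := by positivity
  have hs := sinh_mul_le (lam * S / 2) θ hz hθ0 hθ1
  have harg : θ * (lam * S / 2) = lam * r / 2 := by
    field_simp [hθ]
    rw [hθ, div_mul_eq_mul_div, div_mul_eq_mul_div, mul_div_cancel_right₀ _ hS.ne']; ring
  rw [harg] at hs
  have h1 : Real.cosh (lam * r) - 1 = 2 * Real.sinh (lam * r / 2) ^ 2 := cosh_sub_one_eq _
  have h2 : Real.cosh (lam * S) - 1 = 2 * Real.sinh (lam * S / 2) ^ 2 := cosh_sub_one_eq _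
  have hsinh_nonneg : 0 ≤ Real.sinh (lam * r / 2) := by
    have : (0:ℝ) ≤ lam * r / 2 := by positivity
    positivity
  have hsq : Real.sinh (lam * r / 2) ^ 2 ≤ θ ^ 2 * Real.sinh (lam * S / 2) ^ 2 := by
    nlinarith [hsinh_nonneg, sinh_mul_le (lam * S / 2) θ hz hθ0 hθ1]
  rw [h1, h2]
  have hθsq : θ ^ 2 = r ^ 2 / S ^ 2 := by rw [hθ]; field_simp
  nlinarith [hθsq]

end CoshIneq
section FormBound

variable {X : Type*} [Countable X] [MeasurableSpace X] [MeasurableSingletonClass X]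

set_option maxHeartbeats 2000000 in
/-- The key quadratic-form lower bound for the conjugated Laplacian. -/
lemma form_bound (b : X → X → ℝ) (m : X → ℝ)
    (hb_nonneg : ∀ x y, 0 ≤ b x y) (hb_symm : ∀ x y, b x y = b y x)
    (hlf : ∀ x, (Function.support (b x)).Finite)
    (hm_pos : ∀ x, 0 < m x)
    (D : ℝ) (hDeg : ∀ x, graphDeg b x / m x ≤ D)
    (S : ℝ) (hS : 0 < S)
    (ρ : X → X → ℝ) (hρ_nonneg : ∀ x y, 0 ≤ ρ x y) (hρ_symm : ∀ x y, ρ x y = ρ y x)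
    (hρ_intrinsic : ∀ x, ∑' y, b x y * ρ x y ^ 2 ≤ m x)
    (hρ_jump : ∀ x y, 0 < b x y → ρ x y ≤ S)
    (lam : ℝ) (hlam : 0 ≤ lam)
    (φ : X → ℝ) (hφ : ∀ x y, |φ x - φ y| ≤ lam * ρ x y)
    (A : Lp ℝ 2 (graphMeasure m) →L[ℝ] Lp ℝ 2 (graphMeasure m))
    (hA : ∀ u : Lp ℝ 2 (graphMeasure m), ∀ a : X,
      (A u : X → ℝ) a = (m a)⁻¹ *
        ∑' y, b a y * ((u : X → ℝ) a - Real.exp (φ a - φ y) * (u : X → ℝ) y))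
    (u : Lp ℝ 2 (graphMeasure m)) :
    -((Real.cosh (lam * S) - 1) / S ^ 2 * ‖u‖ ^ 2) ≤ (inner ℝ (A u) u : ℝ) := by
  classical
  set f : X → ℝ := ((u : Lp ℝ 2 (graphMeasure m)) : X → ℝ) with hf
  set cS : ℝ := (Real.cosh (lam * S) - 1) / S ^ 2 with hcS
  have hcS0 : 0 ≤ cS := by
    have := Real.one_le_cosh (lam * S)
    have hS2 : (0:ℝ) < S ^ 2 := by positivity
    rw [hcS]
    apply div_nonneg (by linarith) (by positivity)
  set T : X × X → ℝ :=
    fun p => b p.1 p.2 * (f p.1 - Real.exp (φ p.1 - φ p.2) * f p.2) * f p.1 with hT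
  set N1 : X × X → ℝ := fun p => b p.1 p.2 * ρ p.1 p.2 ^ 2 * f p.1 ^ 2 with hN1def
  set N2 : X × X → ℝ := fun p => b p.1 p.2 * ρ p.1 p.2 ^ 2 * f p.2 ^ 2 with hN2def
  -- slice summability
  have hslice : ∀ a : X, ∀ g : X → ℝ, (∀ y, b a y = 0 → g y = 0) → Summable g := by
    intro a g hg
    refine summable_of_ne_finset_zero (s := (hlf a).toFinset) (fun y hy => hg y ?_)
    by_contra hby
    exact hy ((hlf a).mem_toFinset.mpr hby)
  -- basic summability from u ∈ L²
  have hfsum : Summable (fun a => m a * (f a * f a)) := gm_summable_inner hm_pos u u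
  have hfsq : Summable (fun a => m a * f a ^ 2) := by
    refine hfsum.congr fun a => ?_
    ring
  have hnorm : ‖u‖ ^ 2 = ∑' a, m a * f a ^ 2 := by
    rw [gm_norm_sq_eq_tsum hm_pos]
    exact tsum_congr fun a => by ring
  set D' : ℝ := max D 0 with hD'
  have hdeg_le : ∀ a, graphDeg b a ≤ D' * m a := by
    intro a
    have h1 : graphDeg b a / m a ≤ D' := le_trans (hDeg a) (le_max_left _ _)
    exact (div_le_iff₀ (hm_pos a)).mp h1
  -- summability of b_{xy} f(x)^2 over pairs
  have hP1 : Summable (fun p : X × X => b p.1 p.2 * f p.1 ^ 2) := by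
    refine (summable_prod_of_nonneg ?_).mpr ⟨?_, ?_⟩
    · intro p
      exact mul_nonneg (hb_nonneg _ _) (sq_nonneg _)
    · intro x
      exact hslice x _ (fun y hy => by simp [hy])
    · refine Summable.of_nonneg_of_le (fun x => tsum_nonneg fun y =>
        mul_nonneg (hb_nonneg _ _) (sq_nonneg _)) (fun x => ?_) (hfsq.mul_left D')
      show (∑' y, b x y * f x ^ 2) ≤ D' * (m x * f x ^ 2)
      rw [tsum_mul_right]
      calc (∑' y, b x y) * f x ^ 2 = graphDeg b x * f x ^ 2 := by rw [graphDeg]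
        _ ≤ D' * m x * f x ^ 2 := mul_le_mul_of_nonneg_right (hdeg_le x) (sq_nonneg _)
        _ = D' * (m x * f x ^ 2) := by ring
  have hP2 : Summable (fun p : X × X => b p.1 p.2 * f p.2 ^ 2) := by
    have h1 : Summable ((fun p : X × X => b p.1 p.2 * f p.1 ^ 2) ∘ (Equiv.prodComm X X)) :=
      ((Equiv.prodComm X X).summable_iff).mpr hP1
    refine h1.congr fun p => ?_
    simp only [Function.comp_apply, Equiv.prodComm_apply, Prod.fst_swap, Prod.snd_swap]
    rw [hb_symm p.2 p.1]
  -- summability of N1, N2 and their tsum bounds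
  have hout1 : Summable (fun a => (∑' y, b a y * ρ a y ^ 2) * f a ^ 2) := by
    refine Summable.of_nonneg_of_le (fun a => mul_nonneg (tsum_nonneg fun y =>
      mul_nonneg (hb_nonneg _ _) (sq_nonneg _)) (sq_nonneg _)) (fun a => ?_) hfsq
    exact mul_le_mul_of_nonneg_right (hρ_intrinsic a) (sq_nonneg _)
  have hN1 : Summable N1 := by
    refine (summable_prod_of_nonneg ?_).mpr ⟨?_, ?_⟩
    · intro p
      exact mul_nonneg (mul_nonneg (hb_nonneg _ _) (sq_nonneg _)) (sq_nonneg _)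
    · intro x
      exact hslice x _ (fun y hy => by simp [hN1def, hy])
    · refine hout1.congr fun a => ?_
      show (∑' y, b a y * ρ a y ^ 2) * f a ^ 2 = ∑' y, b a y * ρ a y ^ 2 * f a ^ 2
      rw [← tsum_mul_right]
  have hN2 : Summable N2 := by
    have h1 : Summable (N1 ∘ (Equiv.prodComm X X)) :=
      ((Equiv.prodComm X X).summable_iff).mpr hN1
    refine h1.congr fun p => ?_
    simp only [hN1def, hN2def, Function.comp_apply, Equiv.prodComm_apply,
      Prod.fst_swap, Prod.snd_swap]
    rw [hb_symm p.2 p.1, hρ_symm p.2 p.1]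
  have hN1sum : ∑' p, N1 p ≤ ‖u‖ ^ 2 := by
    rw [Summable.tsum_prod' hN1 (fun x => hslice x _ (fun y hy => by simp [hN1def, hy])), hnorm]
    refine Summable.tsum_le_tsum (fun a => ?_) ?_ hfsq
    · show (∑' y, b a y * ρ a y ^ 2 * f a ^ 2) ≤ m a * f a ^ 2
      rw [tsum_mul_right]
      exact mul_le_mul_of_nonneg_right (hρ_intrinsic a) (sq_nonneg _)
    · refine Summable.congr hout1 fun a => ?_
      show (∑' y, b a y * ρ a y ^ 2) * f a ^ 2 = ∑' y, b a y * ρ a y ^ 2 * f a ^ 2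
      rw [← tsum_mul_right]
  have hN2sum : ∑' p, N2 p ≤ ‖u‖ ^ 2 := by
    have h1 : ∑' p, N2 p = ∑' p, N1 p := by
      rw [← (Equiv.prodComm X X).tsum_eq N1]
      refine tsum_congr fun p => ?_
      simp only [hN1def, hN2def, Equiv.prodComm_apply, Prod.fst_swap, Prod.snd_swap]
      rw [hb_symm p.2 p.1, hρ_symm p.2 p.1]
    rw [h1]; exact hN1sum
  -- jump size bound for the exponential weight
  set K : ℝ := Real.exp (lam * S) with hK
  have hK1 : 1 ≤ K := by
    rw [hK, ← Real.exp_zero]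
    exact Real.exp_le_exp.mpr (by positivity)
  have hE_le : ∀ a y, 0 < b a y → Real.exp (φ a - φ y) ≤ K := by
    intro a y hb
    rw [hK]
    refine Real.exp_le_exp.mpr ?_
    calc φ a - φ y ≤ |φ a - φ y| := le_abs_self _
      _ ≤ lam * ρ a y := hφ a y
      _ ≤ lam * S := mul_le_mul_of_nonneg_left (hρ_jump a y hb) hlam
  -- summability of T
  have hTsum : Summable T := by
    refine Summable.of_norm_bounded
      (g := fun p => 2 * K * (b p.1 p.2 * f p.1 ^ 2) + K * (b p.1 p.2 * f p.2 ^ 2))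
      ((hP1.mul_left _).add (hP2.mul_left _)) (fun p => ?_)
    rw [Real.norm_eq_abs]
    rcases eq_or_lt_of_le (hb_nonneg p.1 p.2) with hb0 | hbpos
    · simp [hT, ← hb0]
    · have hE := hE_le p.1 p.2 hbpos
      have hEpos : 0 < Real.exp (φ p.1 - φ p.2) := Real.exp_pos _
      have habs : |f p.1 - Real.exp (φ p.1 - φ p.2) * f p.2| ≤ |f p.1| + K * |f p.2| := by
        calc |f p.1 - Real.exp (φ p.1 - φ p.2) * f p.2|
            ≤ |f p.1| + |Real.exp (φ p.1 - φ p.2) * f p.2| := abs_sub _ _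
          _ = |f p.1| + Real.exp (φ p.1 - φ p.2) * |f p.2| := by
              rw [abs_mul, abs_of_pos hEpos]
          _ ≤ |f p.1| + K * |f p.2| :=
              add_le_add le_rfl (mul_le_mul_of_nonneg_right hE (abs_nonneg _))
      have hscalar : (|f p.1| + K * |f p.2|) * |f p.1| ≤
          2 * K * f p.1 ^ 2 + K * f p.2 ^ 2 := by
        nlinarith [sq_nonneg (|f p.1| - |f p.2|), sq_abs (f p.1), sq_abs (f p.2),
          abs_nonneg (f p.1), abs_nonneg (f p.2), hK1]
      calc |T p| = b p.1 p.2 * (|f p.1 - Real.exp (φ p.1 - φ p.2) * f p.2| * |f p.1|) := by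
            rw [hT]
            simp only
            rw [abs_mul, abs_mul, abs_of_pos hbpos, mul_assoc]
        _ ≤ b p.1 p.2 * ((|f p.1| + K * |f p.2|) * |f p.1|) := by
            refine mul_le_mul_of_nonneg_left ?_ hbpos.le
            exact mul_le_mul_of_nonneg_right habs (abs_nonneg _)
        _ ≤ b p.1 p.2 * (2 * K * f p.1 ^ 2 + K * f p.2 ^ 2) :=
            mul_le_mul_of_nonneg_left hscalar hbpos.le
        _ = 2 * K * (b p.1 p.2 * f p.1 ^ 2) + K * (b p.1 p.2 * f p.2 ^ 2) := by ring
  have hTslice : ∀ a, Summable (fun y => T (a, y)) :=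
    fun a => hslice a _ (fun y hy => by simp [hT, hy])
  -- the inner ℝ product as a double sum
  have hinnerT : (inner ℝ (A u) u : ℝ) = ∑' p, T p := by
    rw [gm_inner_eq_tsum hm_pos, Summable.tsum_prod' hTsum hTslice]
    refine tsum_congr fun a => ?_
    rw [hA u a]
    have hma : m a ≠ 0 := (hm_pos a).ne'
    rw [← hf]
    calc m a * ((m a)⁻¹ *
          (∑' y, b a y * (f a - Real.exp (φ a - φ y) * f y)) * f a)
        = (∑' y, b a y * (f a - Real.exp (φ a - φ y) * f y)) * f a := by
          field_simp
      _ = ∑' y, b a y * (f a - Real.exp (φ a - φ y) * f y) * f a := by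
          rw [tsum_mul_right]
      _ = ∑' y, T (a, y) := rfl
  -- swap summability and tsum equality
  have hTswap : Summable (fun p : X × X => T ((Equiv.prodComm X X) p)) :=
    ((Equiv.prodComm X X).summable_iff).mpr hTsum
  have hswap_eq : ∑' p, T ((Equiv.prodComm X X) p) = ∑' p, T p :=
    (Equiv.prodComm X X).tsum_eq T
  -- pointwise symmetrized lower bound
  have hpt : ∀ p : X × X, -(cS * (N1 p + N2 p)) ≤ T p + T ((Equiv.prodComm X X) p) := by
    rintro ⟨a, y⟩
    simp only [hT, hN1def, hN2def, Equiv.prodComm_apply, Prod.swap_prod_mk]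
    rcases eq_or_lt_of_le (hb_nonneg a y) with hb0 | hbpos
    · rw [← hb0, hb_symm y a, ← hb0]
      simp
    · have hρS : ρ a y ≤ S := hρ_jump a y hbpos
      have hρ0 : 0 ≤ ρ a y := hρ_nonneg a y
      set s : ℝ := φ a - φ y with hs
      have hby : b y a = b a y := hb_symm y a
      have hsy : φ y - φ a = -s := by rw [hs]; ring
      have hid : b a y * (f a - Real.exp s * f y) * f a +
          b y a * (f y - Real.exp (φ y - φ a) * f a) * f y =
          b a y * (f a ^ 2 + f y ^ 2) - 2 * b a y * Real.cosh s * (f a * f y) := by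
        rw [hby, hsy, Real.cosh_eq]
        ring
      rw [hid]
      have h1 : Real.cosh s ≤ Real.cosh (lam * ρ a y) := by
        refine Real.cosh_le_cosh.mpr ?_
        rw [abs_of_nonneg (mul_nonneg hlam hρ0)]
        exact hφ a y
      have h2 : Real.cosh (lam * ρ a y) - 1 ≤ cS * ρ a y ^ 2 := by
        have := cosh_sub_one_le_sq_ratio lam (ρ a y) S hlam hS hρ0 hρS
        rw [hcS]
        calc Real.cosh (lam * ρ a y) - 1
            ≤ ρ a y ^ 2 / S ^ 2 * (Real.cosh (lam * S) - 1) := this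
          _ = (Real.cosh (lam * S) - 1) / S ^ 2 * ρ a y ^ 2 := by ring
      have h3 : 1 ≤ Real.cosh s := Real.one_le_cosh s
      have t1 : 0 ≤ b a y * Real.cosh s * (f a - f y) ^ 2 :=
        mul_nonneg (mul_nonneg hbpos.le (by linarith)) (sq_nonneg _)
      have t2 : 0 ≤ b a y * (Real.cosh (lam * ρ a y) - Real.cosh s) *
          (f a ^ 2 + f y ^ 2) :=
        mul_nonneg (mul_nonneg hbpos.le (by linarith))
          (add_nonneg (sq_nonneg _) (sq_nonneg _))
      have t3 : 0 ≤ b a y * (cS * ρ a y ^ 2 - (Real.cosh (lam * ρ a y) - 1)) *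
          (f a ^ 2 + f y ^ 2) :=
        mul_nonneg (mul_nonneg hbpos.le (by linarith))
          (add_nonneg (sq_nonneg _) (sq_nonneg _))
      nlinarith [t1, t2, t3]
  -- assemble
  have hsum_add : ∑' p, (T p + T ((Equiv.prodComm X X) p)) =
      ∑' p, T p + ∑' p, T ((Equiv.prodComm X X) p) := Summable.tsum_add hTsum hTswap
  have hlower : ∑' p, -(cS * (N1 p + N2 p)) ≤ ∑' p, (T p + T ((Equiv.prodComm X X) p)) :=
    Summable.tsum_le_tsum hpt (((hN1.add hN2).mul_left cS).neg) (hTsum.add hTswap)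
  have hlhs : ∑' p, -(cS * (N1 p + N2 p)) = -(cS * (∑' p, N1 p + ∑' p, N2 p)) := by
    rw [tsum_neg, tsum_mul_left, Summable.tsum_add hN1 hN2]
  rw [hlhs, hsum_add, hswap_eq] at hlower
  have hfinal : -(cS * (∑' p, N1 p + ∑' p, N2 p)) ≥ -(cS * (2 * ‖u‖ ^ 2)) := by
    have : ∑' p, N1 p + ∑' p, N2 p ≤ 2 * ‖u‖ ^ 2 := by linarith
    nlinarith
  rw [hinnerT]
  linarith

end FormBound
set_option maxHeartbeats 2000000 in
theorem stmt8 {X : Type*} [Countable X] [MeasurableSpace X] [MeasurableSingletonClass X]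
    (b : X → X → ℝ) (m : X → ℝ)
    (hb_nonneg : ∀ x y, 0 ≤ b x y) (hb_symm : ∀ x y, b x y = b y x)
    (hb_loop : ∀ x, b x x = 0)
    (hlf : ∀ x, (Function.support (b x)).Finite)
    (hm_pos : ∀ x, 0 < m x)
    (hconn : ∀ x y, Relation.ReflTransGen (fun u v => 0 < b u v) x y)
    -- the weighted vertex degree `Deg = deg/m` is bounded
    (hDeg_bdd : ∃ D : ℝ, ∀ x, graphDeg b x / m x ≤ D)
    -- `ρ` is an intrinsic pseudo-metric with jump size at most `S ∈ (0,∞)`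
    (S : ℝ) (hS : 0 < S)
    (ρ : X → X → ℝ)
    (hρ_refl : ∀ x, ρ x x = 0) (hρ_symm : ∀ x y, ρ x y = ρ y x)
    (hρ_tri : ∀ x y z, ρ x z ≤ ρ x y + ρ y z)
    (hρ_intrinsic : ∀ x, ∑' y, b x y * ρ x y ^ 2 ≤ m x)
    (hρ_jump : ∀ x y, 0 < b x y → ρ x y ≤ S)
    -- the Laplacian, a bounded self-adjoint operator on `ℓ²(X,m)`
    (Δ : Lp ℝ 2 (graphMeasure m) →L[ℝ] Lp ℝ 2 (graphMeasure m))
    (hΔ : ∀ u : Lp ℝ 2 (graphMeasure m), ∀ x : X,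
      (Δ u : X → ℝ) x = (m x)⁻¹ * ∑' y, b x y * ((u : X → ℝ) x - (u : X → ℝ) y))
    (hΔ_sa : IsSelfAdjoint Δ)
    -- the heat kernel `p_t(x,y) = ⟨δ_x, e^{−tΔ} δ_y⟩ / (m(x)·m(y))`
    (p : ℝ → X → X → ℝ)
    (hp : ∀ t x y, p t x y =
      (inner ℝ (deltaVert m x) (NormedSpace.exp (-(t • Δ)) (deltaVert m y)) : ℝ) /
        (m x * m y)) :
    ∀ (x y : X) (t : ℝ), 0 < t →
      p t x y ≤ (Real.sqrt (m x * m y))⁻¹ *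
        Real.exp (-(t / S ^ 2 * zeta (ρ x y * S / t))) := by
  intro x y t ht
  classical
  obtain ⟨D, hDeg⟩ := hDeg_bdd
  have hρ_nonneg : ∀ a c, 0 ≤ ρ a c := by
    intro a c
    have h1 := hρ_tri a c a
    rw [hρ_refl a, hρ_symm c a] at h1
    linarith
  set R : ℝ := ρ x y with hR
  have hR0 : 0 ≤ R := hρ_nonneg x y
  set r : ℝ := R * S / t with hr
  have hr0 : 0 ≤ r := by positivity
  set lam : ℝ := Real.arsinh r / S with hlam_def
  have harc0 : 0 ≤ Real.arsinh r := by
    rw [← Real.arsinh_zero]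
    exact Real.arsinh_le_arsinh.mpr hr0
  have hlam : 0 ≤ lam := div_nonneg harc0 hS.le
  set ψ : X → ℝ := fun z => min (ρ x z) R with hψdef
  set φ : X → ℝ := fun z => -(lam * ψ z) with hφdef
  have hψ0 : ∀ z, 0 ≤ ψ z := fun z => le_min (hρ_nonneg x z) hR0
  have hψR : ∀ z, ψ z ≤ R := fun z => min_le_right _ _
  have hφ_bdd : ∀ z, |φ z| ≤ lam * R := by
    intro z
    rw [hφdef]
    simp only [abs_neg, abs_mul, abs_of_nonneg hlam, abs_of_nonneg (hψ0 z)]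
    exact mul_le_mul_of_nonneg_left (hψR z) hlam
  -- Lipschitz property of ψ and φ
  have hmin_lip : ∀ (a c : ℝ), min a R - min c R ≤ |a - c| := by
    intro a c
    have h1 : min a R ≤ min (c + |a - c|) (R + |a - c|) := by
      refine min_le_min ?_ ?_
      · linarith [le_abs_self (a - c)]
      · linarith [abs_nonneg (a - c)]
    rw [min_add_add_right] at h1
    linarith
  have hψ_lip : ∀ z c, |ψ z - ψ c| ≤ ρ z c := by
    intro z c
    have hab : |ρ x z - ρ x c| ≤ ρ z c := by
      rw [abs_sub_le_iff]
      constructor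
      · have := hρ_tri x c z
        rw [hρ_symm c z] at this
        linarith
      · have := hρ_tri x z c
        linarith
    rw [abs_sub_le_iff]
    constructor
    · exact le_trans (hmin_lip (ρ x z) (ρ x c)) hab
    · refine le_trans (hmin_lip (ρ x c) (ρ x z)) ?_
      rw [abs_sub_comm]
      exact hab
  have hφ_lip : ∀ z c, |φ z - φ c| ≤ lam * ρ z c := by
    intro z c
    have : φ z - φ c = -(lam * (ψ z - ψ c)) := by rw [hφdef]; ring
    rw [this, abs_neg, abs_mul, abs_of_nonneg hlam]
    exact mul_le_mul_of_nonneg_left (hψ_lip z c) hlam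
  -- the multiplication operators
  set C : ℝ := Real.exp (lam * R) with hC
  have hC0 : 0 ≤ C := (Real.exp_pos _).le
  set wp : X → ℝ := fun z => Real.exp (φ z) with hwpdef
  set wm : X → ℝ := fun z => Real.exp (-(φ z)) with hwmdef
  have hwp : ∀ z, |wp z| ≤ C := by
    intro z
    rw [hwpdef, hC]
    simp only [abs_of_pos (Real.exp_pos _)]
    exact Real.exp_le_exp.mpr (le_trans (le_abs_self _) (hφ_bdd z))
  have hwm : ∀ z, |wm z| ≤ C := by
    intro z
    rw [hwmdef, hC]
    simp only [abs_of_pos (Real.exp_pos _)]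
    exact Real.exp_le_exp.mpr (le_trans (neg_le_abs _) (hφ_bdd z))
  set Mp := mulOp m hm_pos wp C hC0 hwp with hMp
  set Mm := mulOp m hm_pos wm C hC0 hwm with hMm
  have hMM : Mp * Mm = 1 := by
    refine mulOp_mul_mulOp hm_pos _ _ _ _ hC0 hC0 hwp hwm (fun z => ?_)
    rw [hwpdef, hwmdef, ← Real.exp_add]
    simp
  have hMM' : Mm * Mp = 1 := by
    refine mulOp_mul_mulOp hm_pos _ _ _ _ hC0 hC0 hwm hwp (fun z => ?_)
    rw [hwpdef, hwmdef, ← Real.exp_add]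
    simp
  set U : (Lp ℝ 2 (graphMeasure m) →L[ℝ] Lp ℝ 2 (graphMeasure m))ˣ :=
    ⟨Mp, Mm, hMM, hMM'⟩ with hU
  set A := Mp * Δ * Mm with hAdef
  -- pointwise formula for the conjugated operator
  have hApt : ∀ u : Lp ℝ 2 (graphMeasure m), ∀ a : X,
      (A u : X → ℝ) a = (m a)⁻¹ *
        ∑' z, b a z * ((u : X → ℝ) a - Real.exp (φ a - φ z) * (u : X → ℝ) z) := by
    intro u a
    have h1 : ∀ (v : Lp ℝ 2 (graphMeasure m)) (z : X),
        (Mm v : X → ℝ) z = Real.exp (-(φ z)) * (v : X → ℝ) z :=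
      fun v z => mulOp_apply hm_pos _ _ _ _ v z
    have h2 : A u = Mp (Δ (Mm u)) := by
      rw [hAdef, ContinuousLinearMap.mul_apply, ContinuousLinearMap.mul_apply]
    rw [h2, hMp, mulOp_apply hm_pos, hΔ (Mm u) a]
    calc wp a * ((m a)⁻¹ * ∑' z, b a z * ((Mm u : X → ℝ) a - (Mm u : X → ℝ) z))
        = (m a)⁻¹ * (wp a * ∑' z, b a z * ((Mm u : X → ℝ) a - (Mm u : X → ℝ) z)) := by
          ring
      _ = (m a)⁻¹ * ∑' z, wp a * (b a z * ((Mm u : X → ℝ) a - (Mm u : X → ℝ) z)) := by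
          rw [tsum_mul_left]
      _ = (m a)⁻¹ * ∑' z, b a z * ((u : X → ℝ) a - Real.exp (φ a - φ z) * (u : X → ℝ) z) := by
          congr 1
          refine tsum_congr fun z => ?_
          rw [h1 u a, h1 u z]
          show Real.exp (φ a) * _ = _
          have e1 : Real.exp (φ a) * Real.exp (-(φ a)) = 1 := by
            rw [← Real.exp_add]; simp
          have e2 : Real.exp (φ a) * Real.exp (-(φ z)) = Real.exp (φ a - φ z) := by
            rw [← Real.exp_add]; ring_nf
          linear_combination (b a z * (u : X → ℝ) a) * e1 - (b a z * (u : X → ℝ) z) * e2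
  -- conjugation of the exponential
  have hconj : -(t • A) = ↑U * (-(t • Δ)) * ↑U⁻¹ := by
    have hU1 : (↑U : Lp ℝ 2 (graphMeasure m) →L[ℝ] Lp ℝ 2 (graphMeasure m)) = Mp := rfl
    have hU2 : (↑U⁻¹ : Lp ℝ 2 (graphMeasure m) →L[ℝ] Lp ℝ 2 (graphMeasure m)) = Mm := rfl
    rw [hU1, hU2, hAdef]
    refine ContinuousLinearMap.ext fun v => ?_
    simp [ContinuousLinearMap.mul_apply, map_neg, _root_.map_smul]
  have hexp : NormedSpace.exp (-(t • Δ)) =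
      ↑U⁻¹ * NormedSpace.exp (-(t • A)) * ↑U := by
    letI : NormedAlgebra ℚ (Lp ℝ 2 (graphMeasure m) →L[ℝ] Lp ℝ 2 (graphMeasure m)) :=
      NormedAlgebra.restrictScalars ℚ ℝ _
    rw [hconj, NormedSpace.exp_units_conj]
    rw [← mul_assoc, ← mul_assoc, Units.inv_mul, one_mul, mul_assoc, Units.inv_mul, mul_one]
  -- form bound and semigroup estimate
  set cS : ℝ := (Real.cosh (lam * S) - 1) / S ^ 2 with hcS
  have hform : ∀ u : Lp ℝ 2 (graphMeasure m), -(cS * ‖u‖ ^ 2) ≤ (inner ℝ (A u) u : ℝ) :=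
    form_bound b m hb_nonneg hb_symm hlf hm_pos D hDeg S hS ρ hρ_nonneg hρ_symm
      hρ_intrinsic hρ_jump lam hlam φ hφ_lip A hApt
  have hGron : ‖NormedSpace.exp (-(t • A)) (deltaVert m y)‖ ≤
      Real.exp (t * cS) * ‖deltaVert m y‖ :=
    exp_norm_le_of_form_bound A cS hform ht.le (deltaVert m y)
  -- values of φ at x and y
  have hφx : φ x = 0 := by
    rw [hφdef]
    simp only [hψdef, hρ_refl x, min_eq_left hR0, mul_zero, neg_zero]
  have hφy : φ y = -(lam * R) := by
    rw [hφdef]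
    simp only [hψdef, ← hR, min_self]
  -- the inner ℝ product identity
  have hIP : (inner ℝ (deltaVert m x) (NormedSpace.exp (-(t • Δ)) (deltaVert m y)) : ℝ) =
      Real.exp (-(lam * R)) *
        (inner ℝ (deltaVert m x) (NormedSpace.exp (-(t • A)) (deltaVert m y)) : ℝ) := by
    rw [hexp]
    have hU2 : (↑U⁻¹ : Lp ℝ 2 (graphMeasure m) →L[ℝ] Lp ℝ 2 (graphMeasure m)) = Mm := rfl
    have hU1 : (↑U : Lp ℝ 2 (graphMeasure m) →L[ℝ] Lp ℝ 2 (graphMeasure m)) = Mp := rfl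
    rw [ContinuousLinearMap.mul_apply, ContinuousLinearMap.mul_apply, hU1, hU2]
    rw [hMp, mulOp_delta hm_pos]
    rw [_root_.map_smul]
    rw [hMm, ← mulOp_symm hm_pos wm C hC0 hwm]
    rw [mulOp_delta hm_pos]
    rw [real_inner_smul_left, real_inner_smul_right]
    simp only [hwpdef, hwmdef]
    rw [hφx, hφy]
    simp only [neg_zero, Real.exp_zero, one_mul, neg_neg]
  -- Cauchy–Schwarz and the semigroup bound
  have hCS : (inner ℝ (deltaVert m x) (NormedSpace.exp (-(t • A)) (deltaVert m y)) : ℝ) ≤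
      Real.exp (t * cS) * (Real.sqrt (m x) * Real.sqrt (m y)) := by
    calc (inner ℝ (deltaVert m x) (NormedSpace.exp (-(t • A)) (deltaVert m y)) : ℝ)
        ≤ ‖deltaVert m x‖ * ‖NormedSpace.exp (-(t • A)) (deltaVert m y)‖ :=
          real_inner_le_norm _ _
      _ ≤ ‖deltaVert m x‖ * (Real.exp (t * cS) * ‖deltaVert m y‖) :=
          mul_le_mul_of_nonneg_left hGron (norm_nonneg _)
      _ = Real.exp (t * cS) * (Real.sqrt (m x) * Real.sqrt (m y)) := by
          rw [deltaVert_norm hm_pos, deltaVert_norm hm_pos]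
          ring
  -- arithmetic of the exponent
  have htne : t ≠ 0 := ht.ne'
  have hlamS : lam * S = Real.arsinh r := by
    rw [hlam_def]
    field_simp
  have hexp_eq : Real.exp (-(lam * R)) * Real.exp (t * cS) =
      Real.exp (-(t / S ^ 2 * zeta r)) := by
    rw [← Real.exp_add]
    congr 1
    rw [hcS, hlamS, Real.cosh_arsinh, zeta]
    have h1 : Real.sqrt (1 + r ^ 2) = Real.sqrt (r ^ 2 + 1) := by rw [add_comm]
    rw [h1]
    have hlamR : lam * R = Real.arsinh r * r / S ^ 2 * t := by
      rw [hlam_def, hr]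
      field_simp
    rw [hlamR]
    field_simp
    ring
  -- final assembly
  rw [hp t x y, hIP]
  have hmx := hm_pos x
  have hmy := hm_pos y
  have hsx : 0 < Real.sqrt (m x) := Real.sqrt_pos.mpr hmx
  have hsy : 0 < Real.sqrt (m y) := Real.sqrt_pos.mpr hmy
  have hfrac : Real.sqrt (m x) * Real.sqrt (m y) / (m x * m y) =
      (Real.sqrt (m x * m y))⁻¹ := by
    rw [Real.sqrt_mul hmx.le]
    have key : (Real.sqrt (m x) * Real.sqrt (m y)) * (Real.sqrt (m x) * Real.sqrt (m y)) =
        m x * m y := by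
      calc (Real.sqrt (m x) * Real.sqrt (m y)) * (Real.sqrt (m x) * Real.sqrt (m y))
          = (Real.sqrt (m x) * Real.sqrt (m x)) * (Real.sqrt (m y) * Real.sqrt (m y)) := by
            ring
        _ = m x * m y := by rw [Real.mul_self_sqrt hmx.le, Real.mul_self_sqrt hmy.le]
    have hpos : (0:ℝ) < Real.sqrt (m x) * Real.sqrt (m y) := by positivity
    rw [← key, div_mul_cancel_left₀ hpos.ne']
  have h1 : Real.exp (-(lam * R)) *
      (inner ℝ (deltaVert m x) (NormedSpace.exp (-(t • A)) (deltaVert m y)) : ℝ) ≤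
      Real.exp (-(lam * R)) * (Real.exp (t * cS) * (Real.sqrt (m x) * Real.sqrt (m y))) :=
    mul_le_mul_of_nonneg_left hCS (Real.exp_pos _).le
  calc Real.exp (-(lam * R)) *
      (inner ℝ (deltaVert m x) (NormedSpace.exp (-(t • A)) (deltaVert m y)) : ℝ) /
        (m x * m y)
      ≤ Real.exp (-(lam * R)) * (Real.exp (t * cS) *
          (Real.sqrt (m x) * Real.sqrt (m y))) / (m x * m y) :=
        (div_le_div_iff_of_pos_right (by positivity)).mpr h1
    _ = Real.exp (-(lam * R)) * Real.exp (t * cS) *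
          (Real.sqrt (m x) * Real.sqrt (m y) / (m x * m y)) := by ring
    _ = Real.exp (-(t / S ^ 2 * zeta r)) * (Real.sqrt (m x * m y))⁻¹ := by
        rw [hexp_eq, hfrac]
    _ = (Real.sqrt (m x * m y))⁻¹ * Real.exp (-(t / S ^ 2 * zeta (ρ x y * S / t))) := by
        rw [mul_comm, hr, hR]

end
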